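/- Fix m > 0 and real numbers t < T, and let I : [t, T] → ℝ be continuous with I_q > 0 for all q ∈ [t, T) and ∫ₜᵀ I_q^(−m) dq < ∞ (as an improper integral). Then lim_{η → 0⁺} ∫ₜᵀ η^(1/m) / (η^(1/m) + I_q)^(m+1) dq = 0. -/

import Mathlib

open Real MeasureTheory Set Filter

/-- For `m > 0`, `t < T`, and a continuous `I : [t,T] → ℝ`, strictly positive on `[t,T)`
with `∫ₜᵀ I_q^(−m) dq < ∞`, the penalty-term integral vanishes in the strong-penalization
limit: `∫ₜᵀ η^(1/m)/(η^(1/m) + I_q)^(m+1) dq → 0` as `η → 0⁺`. -/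
theorem stmt_12 (m t T : ℝ) (hm : 0 < m) (htT : t < T)
    (I : ℝ → ℝ) (hI_cont : ContinuousOn I (Icc t T))
    (hI_pos : ∀ q ∈ Ico t T, 0 < I q)
    (hI_int : IntegrableOn (fun q => I q ^ (-m)) (Ioo t T)) :
    Tendsto (fun η : ℝ => ∫ q in Ioo t T, η ^ (1 / m) / (η ^ (1 / m) + I q) ^ (m + 1))
      (nhdsWithin 0 (Ioi 0)) (nhds 0) := by
  have hpos : ∀ q ∈ Ioo t T, 0 < I q := fun q hq => hI_pos q ⟨hq.1.le, hq.2⟩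
  have key := MeasureTheory.tendsto_integral_filter_of_dominated_convergence
    (μ := (volume : Measure ℝ).restrict (Ioo t T))
    (l := nhdsWithin (0:ℝ) (Ioi 0))
    (F := fun η q => η ^ (1 / m) / (η ^ (1 / m) + I q) ^ (m + 1))
    (f := fun _ => (0:ℝ))
    (fun q => I q ^ (-m))
    ?meas ?bound hI_int ?lim
  · simpa using key
  case meas =>
    filter_upwards [self_mem_nhdsWithin] with η (hη : η ∈ Ioi (0:ℝ))
    have hε : 0 < η ^ (1 / m) := Real.rpow_pos_of_pos hη _
    apply ContinuousOn.aestronglyMeasurable _ measurableSet_Ioo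
    apply ContinuousOn.div continuousOn_const
    · apply ContinuousOn.rpow_const
      · exact continuousOn_const.add (hI_cont.mono Ioo_subset_Icc_self)
      · intro q hq
        exact Or.inr (by positivity)
    · intro q hq
      have := hpos q hq
      positivity
  case bound =>
    filter_upwards [self_mem_nhdsWithin] with η (hη : η ∈ Ioi (0:ℝ))
    filter_upwards [ae_restrict_mem measurableSet_Ioo] with q hq
    have hc : 0 < I q := hpos q hq
    have hε : 0 < η ^ (1 / m) := Real.rpow_pos_of_pos hη _
    set ε := η ^ (1 / m)
    have hεc : 0 < ε + I q := by linarith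
    have h1 : ε * I q ^ m ≤ (ε + I q) ^ (m + 1) := by
      have : (ε + I q) ^ (m + 1) = (ε + I q) * (ε + I q) ^ m := by
        rw [Real.rpow_add hεc, Real.rpow_one, mul_comm]
      rw [this]
      have h2 : I q ^ m ≤ (ε + I q) ^ m :=
        Real.rpow_le_rpow hc.le (by linarith) hm.le
      have h3 : ε ≤ ε + I q := by linarith
      exact mul_le_mul h3 h2 (Real.rpow_nonneg hc.le m) hεc.le
    have hden : 0 < (ε + I q) ^ (m + 1) := Real.rpow_pos_of_pos hεc _
    have hnn : 0 ≤ ε / (ε + I q) ^ (m + 1) := by positivity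
    rw [Real.norm_eq_abs, abs_of_nonneg hnn]
    have : ε / (ε + I q) ^ (m + 1) ≤ ε / (ε * I q ^ m) := by
      exact div_le_div_of_nonneg_left hε.le (by positivity) h1
    calc ε / (ε + I q) ^ (m + 1) ≤ ε / (ε * I q ^ m) := this
      _ = I q ^ (-m) := by
          rw [Real.rpow_neg hc.le]
          field_simp
  case lim =>
    filter_upwards [ae_restrict_mem measurableSet_Ioo] with q hq
    have hc : 0 < I q := hpos q hq
    have h0 : Tendsto (fun η : ℝ => η ^ (1 / m)) (nhdsWithin 0 (Ioi 0)) (nhds 0) := by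
      have := (Real.continuousAt_rpow_const 0 (1 / m)
        (Or.inr (by positivity))).tendsto
      have h00 : (0:ℝ) ^ (1 / m) = 0 := Real.zero_rpow (by positivity)
      have := this.mono_left (nhdsWithin_le_nhds (s := Ioi (0:ℝ)))
      rwa [h00] at this
    have hden : Tendsto (fun η : ℝ => (η ^ (1 / m) + I q) ^ (m + 1))
        (nhdsWithin 0 (Ioi 0)) (nhds (I q ^ (m + 1))) := by
      have h1 : Tendsto (fun η : ℝ => η ^ (1 / m) + I q) (nhdsWithin 0 (Ioi 0))
          (nhds (I q)) := by simpa using h0.add_const (I q)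
      have h2 : ContinuousAt (fun x : ℝ => x ^ (m + 1)) (I q) :=
        Real.continuousAt_rpow_const _ _ (Or.inl hc.ne')
      exact h2.tendsto.comp h1
    have hne : (I q) ^ (m + 1) ≠ 0 := ne_of_gt (Real.rpow_pos_of_pos hc _)
    have hlim := h0.div hden hne
    rw [zero_div] at hlim
    exact hlim
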